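/- Let p, q : ℕ. On ℝ^p × ℝ^q define the symmetric bilinear form b((x,y),(x',y')) = ∑_i x i * x' i − ∑_j y j * y' j. Let A ∈ Matrix (Fin p) (Fin p) ℝ, B ∈ Matrix (Fin p) (Fin q) ℝ, C ∈ Matrix (Fin q) (Fin p) ℝ, D ∈ Matrix (Fin q) (Fin q) ℝ, and suppose g = fromBlocks A B C D satisfies g * M * gᵀ = M where M is the diagonal matrix with first p entries 1 and last q entries −1 (i.e. g ∈ O(p,q)). Let X ∈ Matrix (Fin p) (Fin q) ℝ with 1 − Xᵀ * X positive definite. Then C * X + D is invertible, the image of W_X = {(X *ᵥ w, w)} under (x,y) ↦ (A *ᵥ x + B *ᵥ y, C *ᵥ x + D *ᵥ y) equals W_{X'} for X' = (A * X + B) * (C * X + D)⁻¹, and 1 − X'ᵀ * X' is positive definite. -/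

import Mathlib

open Matrix

private lemma aux_posdef_conj {q : ℕ} {S : Matrix (Fin q) (Fin q) ℝ} (hS : S.PosDef)
    (Y : Matrix (Fin q) (Fin q) ℝ) (hY : Function.Injective (Y.mulVec)) :
    (Yᵀ * S * Y).PosDef := by
  rw [posDef_iff_dotProduct_mulVec]
  constructor
  · have h1 := hS.1.eq
    simp only [IsHermitian, conjTranspose_eq_transpose_of_trivial] at h1 ⊢
    rw [transpose_mul, transpose_mul, transpose_transpose, h1, mul_assoc]
  · intro x hx
    have hYx : Y *ᵥ x ≠ 0 := by
      intro h
      apply hx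
      have := hY (a₁ := x) (a₂ := 0) (by simpa using h)
      simpa using this
    have := hS.dotProduct_mulVec_pos hYx
    calc (0:ℝ) < star (Y *ᵥ x) ⬝ᵥ (S *ᵥ (Y *ᵥ x)) := this
      _ = star x ⬝ᵥ ((Yᵀ * S * Y) *ᵥ x) := by
          rw [star_trivial, star_trivial, ← mulVec_mulVec, ← mulVec_mulVec,
            dotProduct_mulVec x, vecMul_transpose]

private lemma aux_key {p q : ℕ} (A : Matrix (Fin p) (Fin p) ℝ) (B : Matrix (Fin p) (Fin q) ℝ)
    (C : Matrix (Fin q) (Fin p) ℝ) (D : Matrix (Fin q) (Fin q) ℝ) (X : Matrix (Fin p) (Fin q) ℝ)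
    (P : Matrix (Fin p) (Fin p) ℝ) (Q : Matrix (Fin q) (Fin q) ℝ)
    (h1 : Cᵀ * C = Aᵀ * A + P) (h2 : Cᵀ * D = Aᵀ * B) (h3 : Dᵀ * C = Bᵀ * A)
    (h4 : Dᵀ * D = Bᵀ * B + Q) :
    (C * X + D)ᵀ * (C * X + D) = (A * X + B)ᵀ * (A * X + B) + (Xᵀ * P * X + Q) := by
  simp only [Matrix.transpose_add, Matrix.transpose_mul]
  calc (Xᵀ * Cᵀ + Dᵀ) * (C * X + D)
      = Xᵀ * (Cᵀ * C) * X + Xᵀ * (Cᵀ * D) + (Dᵀ * C) * X + Dᵀ * D := by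
        simp only [Matrix.mul_add, Matrix.add_mul, Matrix.mul_assoc]; abel
    _ = Xᵀ * (Aᵀ * A + P) * X + Xᵀ * (Aᵀ * B) + (Bᵀ * A) * X + (Bᵀ * B + Q) := by
        rw [h1, h2, h3, h4]
    _ = (Xᵀ * Aᵀ + Bᵀ) * (A * X + B) + (Xᵀ * P * X + Q) := by
        simp only [Matrix.mul_add, Matrix.add_mul, Matrix.mul_assoc]; abel

private lemma aux_conj_eq {p q : ℕ} (E : Matrix (Fin p) (Fin q) ℝ)
    (Y Z S : Matrix (Fin q) (Fin q) ℝ)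
    (hkey : Yᵀ * Y = Eᵀ * E + S) (hYZ : Y * Z = 1) :
    Zᵀ * S * Z + (E * Z)ᵀ * (E * Z) = 1 := by
  calc Zᵀ * S * Z + (E * Z)ᵀ * (E * Z) = Zᵀ * (Eᵀ * E + S) * Z := by
        simp only [Matrix.transpose_mul, Matrix.mul_add, Matrix.add_mul, Matrix.mul_assoc]; abel
    _ = Zᵀ * (Yᵀ * Y) * Z := by rw [← hkey]
    _ = (Y * Z)ᵀ * (Y * Z) := by simp only [Matrix.transpose_mul, Matrix.mul_assoc]
    _ = 1 := by rw [hYZ]; simp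

theorem stmt_16 (p q : ℕ)
    (b : ((Fin p → ℝ) × (Fin q → ℝ)) → ((Fin p → ℝ) × (Fin q → ℝ)) → ℝ)
    (hb : ∀ v v', b v v' = (∑ i, v.1 i * v'.1 i) - ∑ j, v.2 j * v'.2 j)
    (A : Matrix (Fin p) (Fin p) ℝ) (B : Matrix (Fin p) (Fin q) ℝ)
    (C : Matrix (Fin q) (Fin p) ℝ) (D : Matrix (Fin q) (Fin q) ℝ)
    (M : Matrix (Fin p ⊕ Fin q) (Fin p ⊕ Fin q) ℝ)
    (hM : M = Matrix.fromBlocks 1 0 0 (-1))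
    (hg : Matrix.fromBlocks A B C D * M * (Matrix.fromBlocks A B C D).transpose = M)
    (X : Matrix (Fin p) (Fin q) ℝ)
    (hX : (1 - X.transpose * X).PosDef) :
    IsUnit (C * X + D) ∧
    (fun v : (Fin p → ℝ) × (Fin q → ℝ) =>
        (A *ᵥ v.1 + B *ᵥ v.2, C *ᵥ v.1 + D *ᵥ v.2)) ''
      {v | ∃ w, v = (X *ᵥ w, w)} =
      {v | ∃ w, v = (((A * X + B) * (C * X + D)⁻¹) *ᵥ w, w)} ∧
    (1 - ((A * X + B) * (C * X + D)⁻¹).transpose *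
        ((A * X + B) * (C * X + D)⁻¹)).PosDef := by
  subst hM
  set g : Matrix (Fin p ⊕ Fin q) (Fin p ⊕ Fin q) ℝ := Matrix.fromBlocks A B C D with hgdef
  set M : Matrix (Fin p ⊕ Fin q) (Fin p ⊕ Fin q) ℝ := Matrix.fromBlocks 1 0 0 (-1) with hMdef
  have hM2 : M * M = 1 := by
    rw [hMdef, Matrix.fromBlocks_multiply]
    simp [← Matrix.fromBlocks_one]
  have hginv : g * (M * gᵀ * M) = 1 := by
    calc g * (M * gᵀ * M) = (g * M * gᵀ) * M := by noncomm_ring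
      _ = M * M := by rw [hg]
      _ = 1 := hM2
  have hinvg : (M * gᵀ * M) * g = 1 := mul_eq_one_comm.mp hginv
  have hg' : gᵀ * M * g = M := by
    calc gᵀ * M * g = (M * M) * (gᵀ * M * g) := by rw [hM2, one_mul]
      _ = M * ((M * gᵀ * M) * g) := by noncomm_ring
      _ = M := by rw [hinvg, mul_one]
  rw [hgdef, hMdef] at hg'
  rw [Matrix.fromBlocks_transpose, Matrix.fromBlocks_multiply, Matrix.fromBlocks_multiply] at hg'
  simp only [Matrix.mul_one, Matrix.mul_zero, Matrix.zero_mul, Matrix.one_mul, add_zero, zero_add,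
    Matrix.mul_neg, Matrix.neg_mul, mul_one] at hg'
  have e11 : Aᵀ * A - Cᵀ * C = 1 := by
    have := congrArg Matrix.toBlocks₁₁ hg'
    simpa [Matrix.toBlocks_fromBlocks₁₁, sub_eq_add_neg] using this
  have e12 : Aᵀ * B - Cᵀ * D = 0 := by
    have := congrArg Matrix.toBlocks₁₂ hg'
    simpa [Matrix.toBlocks_fromBlocks₁₂, sub_eq_add_neg] using this
  have e21 : Bᵀ * A - Dᵀ * C = 0 := by
    have := congrArg Matrix.toBlocks₂₁ hg'
    simpa [Matrix.toBlocks_fromBlocks₂₁, sub_eq_add_neg] using this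
  have e22 : Bᵀ * B - Dᵀ * D = -1 := by
    have := congrArg Matrix.toBlocks₂₂ hg'
    simpa [Matrix.toBlocks_fromBlocks₂₂, sub_eq_add_neg] using this
  have h1 : Cᵀ * C = Aᵀ * A + (-1) := by
    have h := eq_add_of_sub_eq e11
    rw [h]; abel
  have h2 : Cᵀ * D = Aᵀ * B := (sub_eq_zero.mp e12).symm
  have h3 : Dᵀ * C = Bᵀ * A := (sub_eq_zero.mp e21).symm
  have h4 : Dᵀ * D = Bᵀ * B + 1 := by
    have h := eq_add_of_sub_eq e22
    rw [h]; abel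
  have key : (C * X + D)ᵀ * (C * X + D) = (A * X + B)ᵀ * (A * X + B) + (1 - Xᵀ * X) := by
    have hK := aux_key A B C D X (-1) 1 h1 h2 h3 h4
    rw [hK]
    congr 1
    rw [Matrix.mul_neg, Matrix.mul_one, Matrix.neg_mul, neg_add_eq_sub]
  have hYtY : ((C * X + D)ᵀ * (C * X + D)).PosDef := by
    rw [key]
    refine Matrix.PosDef.posSemidef_add ?_ hX
    have := Matrix.posSemidef_conjTranspose_mul_self (A * X + B)
    rwa [Matrix.conjTranspose_eq_transpose_of_trivial] at this
  have hdet : (C * X + D).det ≠ 0 := by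
    have hpos := hYtY.det_pos
    rw [Matrix.det_mul, Matrix.det_transpose] at hpos
    intro h
    rw [h] at hpos
    simp at hpos
  have hUdet : IsUnit (C * X + D).det := isUnit_iff_ne_zero.mpr hdet
  have hU : IsUnit (C * X + D) := (Matrix.isUnit_iff_isUnit_det _).mpr hUdet
  have hYiY : (C * X + D)⁻¹ * (C * X + D) = 1 := Matrix.nonsing_inv_mul _ hUdet
  have hYYi : (C * X + D) * (C * X + D)⁻¹ = 1 := Matrix.mul_nonsing_inv _ hUdet
  refine ⟨hU, ?_, ?_⟩
  · ext v
    simp only [Set.mem_image, Set.mem_setOf_eq]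
    constructor
    · rintro ⟨-, ⟨w, rfl⟩, rfl⟩
      refine ⟨(C * X + D) *ᵥ w, ?_⟩
      have hh2 : C *ᵥ (X *ᵥ w) + D *ᵥ w = (C * X + D) *ᵥ w := by
        rw [Matrix.mulVec_mulVec, ← Matrix.add_mulVec]
      have hh1 : A *ᵥ (X *ᵥ w) + B *ᵥ w
          = ((A * X + B) * (C * X + D)⁻¹) *ᵥ ((C * X + D) *ᵥ w) := by
        rw [Matrix.mulVec_mulVec, Matrix.mulVec_mulVec, Matrix.mul_assoc, hYiY,
          Matrix.mul_one, ← Matrix.add_mulVec]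
      simp only [Prod.mk.injEq]
      exact ⟨hh1, hh2⟩
    · rintro ⟨u, rfl⟩
      refine ⟨(X *ᵥ ((C * X + D)⁻¹ *ᵥ u), (C * X + D)⁻¹ *ᵥ u),
        ⟨(C * X + D)⁻¹ *ᵥ u, rfl⟩, ?_⟩
      have hh1 : A *ᵥ (X *ᵥ ((C * X + D)⁻¹ *ᵥ u)) + B *ᵥ ((C * X + D)⁻¹ *ᵥ u)
          = ((A * X + B) * (C * X + D)⁻¹) *ᵥ u := by
        rw [Matrix.mulVec_mulVec, Matrix.mulVec_mulVec, Matrix.mulVec_mulVec,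
          ← Matrix.add_mulVec, Matrix.add_mul]
      have hh2 : C *ᵥ (X *ᵥ ((C * X + D)⁻¹ *ᵥ u)) + D *ᵥ ((C * X + D)⁻¹ *ᵥ u) = u := by
        rw [Matrix.mulVec_mulVec, Matrix.mulVec_mulVec, Matrix.mulVec_mulVec,
          ← Matrix.add_mulVec, ← Matrix.add_mul, hYYi, Matrix.one_mulVec]
      simp only [Prod.mk.injEq]
      exact ⟨hh1, hh2⟩
  · have hinj : Function.Injective ((C * X + D)⁻¹).mulVec := by
      intro x y h
      have := congrArg (fun z => (C * X + D) *ᵥ z) h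
      simpa [Matrix.mulVec_mulVec, hYYi, Matrix.one_mulVec] using this
    have hc := aux_conj_eq (A * X + B) (C * X + D) ((C * X + D)⁻¹) (1 - Xᵀ * X) key hYYi
    have heq : 1 - ((A * X + B) * (C * X + D)⁻¹)ᵀ * ((A * X + B) * (C * X + D)⁻¹)
        = ((C * X + D)⁻¹)ᵀ * (1 - Xᵀ * X) * (C * X + D)⁻¹ := by
      rw [sub_eq_iff_eq_add]
      exact hc.symm
    rw [heq]
    exact aux_posdef_conj hX _ hinj
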